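/- (Monotonicity under adding points) Let Z ⊆ Z' be two locally finite subsets of (−∞, 0], both containing 0 and unbounded below. Then R₀(Z') ≤ R₀(Z), where for such a set W, labeled in decreasing order 0 = w₀ > w₁ > w₂ > ⋯, one defines R₀(W) = sup{−w_j : −w_j > 2(−w_{j−1}), j ≥ 1}. -/

import Mathlib

/-- **Monotonicity under adding points.**  Let `Z ⊆ Z'` be locally finite subsets of
`(-∞, 0]`, both containing `0` and unbounded below, enumerated in decreasing order as
`0 = w₀ > w₁ > ⋯` and `0 = w₀' > w₁' > ⋯` respectively.  Then `R₀(Z') ≤ R₀(Z)`, where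
`R₀(W) = sup {-w_j : -w_j > 2 (-w_{j-1}), j ≥ 1}` (computed in `EReal`). -/
theorem R_antitone_in_configuration (Z Z' : Set ℝ) (w w' : ℕ → ℝ)
    (hZsub : Z ⊆ Set.Iic 0) (hZ'sub : Z' ⊆ Set.Iic 0)
    (hlf : ∀ r : ℝ, (Z ∩ Set.Icc r 0).Finite) (hlf' : ∀ r : ℝ, (Z' ∩ Set.Icc r 0).Finite)
    (hub : ¬BddBelow Z) (hub' : ¬BddBelow Z')
    (h0Z : (0 : ℝ) ∈ Z) (h0Z' : (0 : ℝ) ∈ Z')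
    (hw : StrictAnti w) (hw0 : w 0 = 0) (hwrange : Set.range w = Z)
    (hw' : StrictAnti w') (hw'0 : w' 0 = 0) (hw'range : Set.range w' = Z')
    (hZZ' : Z ⊆ Z') :
    sSup {d : EReal | ∃ j : ℕ, 1 ≤ j ∧ d = ((-w' j : ℝ) : EReal) ∧
        -w' j > 2 * (-w' (j - 1))} ≤
      sSup {d : EReal | ∃ j : ℕ, 1 ≤ j ∧ d = ((-w j : ℝ) : EReal) ∧
        -w j > 2 * (-w (j - 1))} := by
  apply sSup_le
  rintro d ⟨j, hj1, rfl, hgap⟩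
  -- `w' (j-1) ≤ 0`
  have hw'j1_le : w' (j - 1) ≤ 0 := by
    have : w' (j - 1) ∈ Z' := hw'range ▸ Set.mem_range_self _
    exact hZ'sub this
  have hw'j_neg : w' j < 0 := by nlinarith
  -- there exists n with w n ≤ w' j
  have hex : ∃ n, w n ≤ w' j := by
    rw [not_bddBelow_iff] at hub
    obtain ⟨z, hzZ, hz⟩ := hub (w' j)
    obtain ⟨n, rfl⟩ := hwrange ▸ hzZ
    exact ⟨n, hz.le⟩
  set k := Nat.find hex with hkdef
  have hk : w k ≤ w' j := Nat.find_spec hex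
  have hk1 : 1 ≤ k := by
    rcases Nat.eq_zero_or_pos k with h0 | h; · exfalso; rw [h0, hw0] at hk; linarith
    exact h
  have hkm : w' j < w (k - 1) := by
    have := Nat.find_min hex (show k - 1 < k by omega)
    linarith [not_le.mp this]
  -- `w (k-1) ∈ Z'`, so it's `w' m` for some `m < j`
  obtain ⟨m, hm⟩ : w (k - 1) ∈ Set.range w' :=
    hw'range.symm ▸ hZZ' (hwrange ▸ Set.mem_range_self _)
  have hmj : m < j := by
    have : w' j < w' m := hm ▸ hkm
    exact hw'.lt_iff_gt.mp this
  have hmono : w' (j - 1) ≤ w' m := hw'.antitone (by omega)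
  have hgap' : -w k > 2 * (-w (k - 1)) := by
    have : w (k - 1) ≥ w' (j - 1) := hm ▸ hmono
    nlinarith
  refine le_trans ?_ (le_sSup ⟨k, hk1, rfl, hgap'⟩)
  exact_mod_cast neg_le_neg hk
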